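/- Let r ≥ 2 be an integer and let G be a finite simple graph on n vertices that contains no copy of the complete graph K_{r+1}. If the minimum degree of G is strictly greater than (1 - 1/(r - 1/3))·n, then G is r-colourable. -/

import Mathlib

open Finset SimpleGraph

set_option linter.unusedSectionVars false
set_option linter.unusedVariables false
set_option linter.unreachableTactic false
set_option linter.unusedTactic false
set_option maxHeartbeats 1600000

namespace AndrasfaiErdosSos

variable {V : Type*} [Fintype V]

lemma isNClique_congr {G : SimpleGraph V} {m k : ℕ} {s : Finset V}
    (h : G.IsNClique m s) (hmn : m = k) : G.IsNClique k s := hmn ▸ h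

lemma sum_deg (G : SimpleGraph V) [DecidableRel G.Adj] (C : Finset V) :
    ∑ x ∈ C, G.degree x = ∑ y : V, ((C.filter (fun x => G.Adj x y)).card) := by
  simp_rw [SimpleGraph.degree, neighborFinset_eq_filter, Finset.card_filter]
  exact Finset.sum_comm

lemma count_lemma (G : SimpleGraph V) [DecidableRel G.Adj] (A B : Finset V) (k : ℕ)
    (h : ∀ y : V, ((A.filter (fun x => G.Adj x y)).card + (B.filter (fun x => G.Adj x y)).card ≤ k)) :
    (∑ x ∈ A, G.degree x) + (∑ x ∈ B, G.degree x) ≤ k * Fintype.card V := by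
  rw [sum_deg, sum_deg, ← Finset.sum_add_distrib]
  calc (∑ y : V, (((A.filter (fun x => G.Adj x y)).card) + ((B.filter (fun x => G.Adj x y)).card)))
      ≤ ∑ _y : V, k := Finset.sum_le_sum (fun y _ => h y)
    _ = k * Fintype.card V := by rw [Finset.sum_const, Finset.card_univ, smul_eq_mul, mul_comm]

lemma degree_mono (G H : SimpleGraph V) [DecidableRel G.Adj] [DecidableRel H.Adj]
    (h : G ≤ H) (z : V) : G.degree z ≤ H.degree z := by
  apply Finset.card_le_card
  intro x hx
  rw [SimpleGraph.mem_neighborFinset] at hx ⊢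
  exact h hx

lemma exists_maximal_ext (G : SimpleGraph V) (k : ℕ) (h : G.CliqueFree k) :
    ∃ H : SimpleGraph V, G ≤ H ∧ H.CliqueFree k ∧
      ∀ H' : SimpleGraph V, H < H' → ¬ H'.CliqueFree k := by
  classical
  let s : Finset (SimpleGraph V) := Finset.univ.filter (fun H => G ≤ H ∧ H.CliqueFree k)
  have hGs : G ∈ s := by simp [s, h]
  obtain ⟨H, hHs, hmax⟩ := s.exists_maximal ⟨G, hGs⟩
  simp only [s, Finset.mem_filter, Finset.mem_univ, true_and] at hHs
  refine ⟨H, hHs.1, hHs.2, fun H' hlt hcf => ?_⟩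
  have : H' ∈ s := by
    simp only [s, Finset.mem_filter, Finset.mem_univ, true_and]
    exact ⟨hHs.1.trans hlt.le, hcf⟩
  exact (lt_irrefl H) (lt_of_lt_of_le hlt (hmax this hlt.le))

lemma witness_clique {G : SimpleGraph V} {r : ℕ}
    (hfree : G.CliqueFree (r+1))
    (hmax : ∀ H' : SimpleGraph V, G < H' → ¬ H'.CliqueFree (r+1))
    {x y : V} (hne : x ≠ y) (hnadj : ¬ G.Adj x y) :
    ∃ S : Finset V, G.IsNClique (r-1) S ∧ ∀ a ∈ S, G.Adj x a ∧ G.Adj y a := by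
  classical
  have hlt : G < G ⊔ SimpleGraph.edge x y := by
    apply lt_of_le_of_ne le_sup_left
    intro hEq
    have : (G ⊔ SimpleGraph.edge x y).Adj x y := by
      rw [sup_adj]
      exact Or.inr ((SimpleGraph.edge_adj x y x y).mpr ⟨Or.inl ⟨rfl, rfl⟩, hne⟩)
    rw [← hEq] at this
    exact hnadj this
  have hncf := hmax _ hlt
  rw [CliqueFree] at hncf
  push_neg at hncf
  obtain ⟨K, hK⟩ := hncf
  have hxyK : x ∈ K ∧ y ∈ K := by
    by_contra hcon
    apply hfree K
    refine ⟨?_, hK.2⟩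
    intro a ha b hb hab
    have := hK.1 ha hb hab
    rw [SimpleGraph.sup_adj, SimpleGraph.edge_adj] at this
    rcases this with hGadj | ⟨hc, _⟩
    · exact hGadj
    · exfalso
      apply hcon
      rcases hc with ⟨rfl, rfl⟩ | ⟨rfl, rfl⟩
      · exact ⟨ha, hb⟩
      · exact ⟨hb, ha⟩
  refine ⟨(K.erase x).erase y, ⟨?_, ?_⟩, ?_⟩
  · intro a ha b hb hab
    have haK : a ∈ K := Finset.mem_of_mem_erase (Finset.mem_of_mem_erase ha)
    have hbK : b ∈ K := Finset.mem_of_mem_erase (Finset.mem_of_mem_erase hb)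
    have hax : a ≠ x := Finset.ne_of_mem_erase (Finset.mem_of_mem_erase ha)
    have hbx : b ≠ x := Finset.ne_of_mem_erase (Finset.mem_of_mem_erase hb)
    have := hK.1 haK hbK hab
    rw [SimpleGraph.sup_adj, SimpleGraph.edge_adj] at this
    rcases this with hGadj | ⟨hc, _⟩
    · exact hGadj
    · exfalso; rcases hc with ⟨h1, _⟩ | ⟨_, h2⟩
      · exact hax h1
      · exact hbx h2
  · rw [Finset.card_erase_of_mem, Finset.card_erase_of_mem hxyK.1, hK.2]
    · omega
    · exact Finset.mem_erase.mpr ⟨hne.symm, hxyK.2⟩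
  · intro a ha
    have haK : a ∈ K := Finset.mem_of_mem_erase (Finset.mem_of_mem_erase ha)
    have hay : a ≠ y := Finset.ne_of_mem_erase ha
    have hax : a ≠ x := Finset.ne_of_mem_erase (Finset.mem_of_mem_erase ha)
    constructor
    · have := hK.1 hxyK.1 haK hax.symm
      rw [SimpleGraph.sup_adj, SimpleGraph.edge_adj] at this
      rcases this with hGadj | ⟨hc, _⟩
      · exact hGadj
      · exfalso; rcases hc with ⟨_, h2⟩ | ⟨h1, _⟩
        · exact hay h2
        · exact hne h1
    · have := hK.1 hxyK.2 haK hay.symm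
      rw [SimpleGraph.sup_adj, SimpleGraph.edge_adj] at this
      rcases this with hGadj | ⟨hc, _⟩
      · exact hGadj
      · exfalso; rcases hc with ⟨h1, _⟩ | ⟨_, h2⟩
        · exact hne h1.symm
        · exact hax h2

lemma colorable_of_transitive (G : SimpleGraph V) (r : ℕ) (hr : 1 ≤ r)
    (hfree : G.CliqueFree (r+1))
    (htrans : ∀ x y z : V, ¬ G.Adj x y → ¬ G.Adj y z → ¬ G.Adj x z) :
    G.Colorable r := by
  classical
  let st : Setoid V := ⟨fun a b => ¬ G.Adj a b,
    ⟨fun a => G.irrefl, fun {a b} h => fun h2 => h h2.symm, fun {a b c} h1 h2 => htrans a b c h1 h2⟩⟩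
  let Q := Quotient st
  have : Fintype Q := Quotient.fintype st
  let C : G.Coloring Q := SimpleGraph.Coloring.mk (fun v => Quotient.mk st v)
    (by
      intro a b hadj hq
      have : ¬ G.Adj a b := Quotient.eq''.mp hq
      exact this hadj)
  have hcol : G.Colorable (Fintype.card Q) := C.colorable
  refine hcol.mono ?_
  by_contra hgt
  push_neg at hgt
  have hcard : r + 1 ≤ Fintype.card Q := hgt
  obtain ⟨f⟩ := Function.Embedding.nonempty_of_card_le (α := Fin (r+1)) (β := Q)
    (by simpa using hcard)
  have hrep : ∀ i : Fin (r+1), ∃ v : V, Quotient.mk st v = f i := fun i => Quotient.exists_rep (f i)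
  choose g hg using hrep
  have hginj : Function.Injective g := by
    intro i j hij
    apply f.injective
    rw [← hg i, ← hg j, hij]
  have hadj : ∀ i j : Fin (r+1), i ≠ j → G.Adj (g i) (g j) := by
    intro i j hij
    by_contra hnadj
    have h2 : (Quotient.mk st (g i) : Q) = Quotient.mk st (g j) := Quotient.sound hnadj
    rw [hg i, hg j] at h2
    exact hij (f.injective h2)
  apply hfree ((Finset.univ : Finset (Fin (r+1))).image g)
  constructor
  · intro a ha b hb hab
    simp only [Finset.mem_coe, Finset.mem_image, Finset.mem_univ, true_and] at ha hb
    obtain ⟨i, rfl⟩ := ha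
    obtain ⟨j, rfl⟩ := hb
    exact hadj i j (fun h => hab (by rw [h]))
  · rw [Finset.card_image_of_injective _ hginj, Finset.card_univ, Fintype.card_fin]


lemma cfive_bound [DecidableEq V] (H : SimpleGraph V) [DecidableRel H.Adj]
    (hfree : H.CliqueFree 3) (v s u w t : V)
    (evs : H.Adj v s) (esu : H.Adj s u) (euw : H.Adj u w) (ewt : H.Adj w t) (etv : H.Adj t v)
    (y : V) :
    ((insert v (insert s (insert u (insert w ({t} : Finset V))))).filter
      (fun x => H.Adj x y)).card ≤ 2 := by
  have htri : ∀ {a b c : V}, H.Adj a b → H.Adj a c → H.Adj b c → False := by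
    intro a b c hab hac hbc
    apply hfree {a, b, c}
    constructor
    · intro x hx y' hy' hxy
      simp only [Finset.coe_insert, Set.mem_insert_iff, Finset.coe_singleton,
        Set.mem_singleton_iff] at hx hy'
      rcases hx with rfl | rfl | rfl <;> rcases hy' with rfl | rfl | rfl <;>
        first | exact absurd rfl hxy | assumption | exact hab.symm | exact hac.symm | exact hbc.symm
    · rw [Finset.card_insert_of_notMem (by simp [hab.ne, hac.ne]),
        Finset.card_insert_of_notMem (by simp [hbc.ne]), Finset.card_singleton]
  by_cases h1 : H.Adj v y <;> by_cases h2 : H.Adj s y <;> by_cases h3 : H.Adj u y <;>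
    by_cases h4 : H.Adj w y <;> by_cases h5 : H.Adj t y
  all_goals try exact (htri evs h1 h2).elim
  all_goals try exact (htri esu h2 h3).elim
  all_goals try exact (htri euw h3 h4).elim
  all_goals try exact (htri ewt h4 h5).elim
  all_goals try exact (htri etv h5 h1).elim
  all_goals simp only [Finset.filter_insert, Finset.filter_singleton, h1, h2, h3, h4, h5,
    if_true, if_false, ite_true, ite_false]
  all_goals first
    | (refine le_trans (Finset.card_insert_le _ _) ?_; simp)
    | simp

/-- The Andrásfai–Erdős–Sós theorem for triangle-free graphs, arithmetic form. -/
theorem aes_two (G : SimpleGraph V) [DecidableRel G.Adj] (hfree : G.CliqueFree 3)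
    (hdeg : ∀ z : V, 2 * Fintype.card V < 5 * G.degree z) : G.Colorable 2 := by
  classical
  obtain ⟨H, hGH, hHfree, hHmax⟩ := exists_maximal_ext G 3 hfree
  haveI : DecidableRel H.Adj := Classical.decRel _
  have hHdeg : ∀ z : V, 2 * Fintype.card V < 5 * H.degree z := fun z =>
    lt_of_lt_of_le (hdeg z) (Nat.mul_le_mul_left _ (degree_mono G H hGH z))
  suffices hcol : H.Colorable 2 from hcol.mono_left hGH
  by_cases htrans : ∀ x y z : V, ¬ H.Adj x y → ¬ H.Adj y z → ¬ H.Adj x z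
  · exact colorable_of_transitive H 2 (by norm_num) hHfree htrans
  exfalso
  push_neg at htrans
  obtain ⟨u, v, w, huv, hvw, huw⟩ := htrans
  have hne_uv : u ≠ v := by rintro rfl; exact hvw huw
  have hne_vw : v ≠ w := by rintro rfl; exact huv huw
  obtain ⟨S, hS, hSadj⟩ := witness_clique (r := 2) hHfree hHmax hne_uv huv
  obtain ⟨T, hT, hTadj⟩ := witness_clique (r := 2) hHfree hHmax hne_vw hvw
  have hS1 : S.card = 1 := by have := hS.2; omega
  have hT1 : T.card = 1 := by have := hT.2; omega
  obtain ⟨s, hSs⟩ := Finset.card_eq_one.mp hS1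
  obtain ⟨t, hTt⟩ := Finset.card_eq_one.mp hT1
  obtain ⟨hsu, hsv⟩ := hSadj s (by rw [hSs]; exact Finset.mem_singleton_self s)
  obtain ⟨htv, htw⟩ := hTadj t (by rw [hTt]; exact Finset.mem_singleton_self t)
  have htri : ∀ {a b c : V}, H.Adj a b → H.Adj a c → H.Adj b c → False := by
    intro a b c hab hac hbc
    apply hHfree {a, b, c}
    constructor
    · intro x hx y' hy' hxy
      simp only [Finset.coe_insert, Set.mem_insert_iff, Finset.coe_singleton,
        Set.mem_singleton_iff] at hx hy'
      rcases hx with rfl | rfl | rfl <;> rcases hy' with rfl | rfl | rfl <;>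
        first | exact absurd rfl hxy | assumption | exact hab.symm | exact hac.symm | exact hbc.symm
    · rw [Finset.card_insert_of_notMem (by simp [hab.ne, hac.ne]),
        Finset.card_insert_of_notMem (by simp [hbc.ne]), Finset.card_singleton]
  -- distinctness
  have hvs : v ≠ s := hsv.ne
  have hvu : v ≠ u := hne_uv.symm
  have hvw' : v ≠ w := hne_vw
  have hvt : v ≠ t := htv.ne
  have hsu' : s ≠ u := hsu.ne'
  have hsw : s ≠ w := by rintro rfl; exact hvw hsv
  have hst : s ≠ t := by rintro rfl; exact htri huw hsu htw
  have hut : u ≠ t := by rintro rfl; exact huv htv.symm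
  have hwt : w ≠ t := htw.ne
  have huw' : u ≠ w := huw.ne
  set A : Finset V := insert v (insert s (insert u (insert w ({t} : Finset V)))) with hA
  have hbound : ∀ y : V,
      ((A.filter (fun x => H.Adj x y)).card + ((∅ : Finset V).filter (fun x => H.Adj x y)).card ≤ 2) := by
    intro y
    rw [Finset.filter_empty, Finset.card_empty, add_zero]
    exact cfive_bound H hHfree v s u w t hsv hsu.symm huw htw htv.symm y
  have hcardA : A.card = 5 := by
    rw [hA, Finset.card_insert_of_notMem (by simp [hvs, hvu, hvw', hvt]),
      Finset.card_insert_of_notMem (by simp [hsu', hsw, hst]),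
      Finset.card_insert_of_notMem (by simp [hut, huw']),
      Finset.card_insert_of_notMem (by simp [hwt]), Finset.card_singleton]
  have hsum := count_lemma H A ∅ 2 hbound
  rw [Finset.sum_empty, add_zero] at hsum
  have hlow : A.card * (2 * Fintype.card V + 1) ≤ ∑ x ∈ A, 5 * H.degree x := by
    have := Finset.card_nsmul_le_sum A (fun x => 5 * H.degree x) (2 * Fintype.card V + 1)
      (fun x _ => Nat.succ_le_of_lt (hHdeg x))
    simpa [smul_eq_mul] using this
  rw [← Finset.mul_sum, hcardA] at hlow
  omega

lemma blind_count {G : SimpleGraph V} [DecidableRel G.Adj] {r : ℕ} (hr : 2 ≤ r)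
    (hfree : G.CliqueFree (r+1))
    (hdeg : ∀ z : V, (3*r-4) * (Fintype.card V) < (3*r-1) * G.degree z)
    {v p : V} (hvp : ¬ G.Adj v p) (hne : v ≠ p)
    {T : Finset V} (hT : G.IsNClique (r-1) T)
    (hTv : ∀ a ∈ T, G.Adj v a) (hTp : ∀ a ∈ T, G.Adj p a)
    {D : Finset V} (hDcard : D.card = r - 2)
    (hblind : ∀ y : V, G.Adj v y → G.Adj p y → (∀ d ∈ D, G.Adj d y) → False) : False := by
  classical
  obtain ⟨a, rfl⟩ : ∃ a, r = a + 2 := ⟨r - 2, by omega⟩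
  have hdeg' : ∀ z : V, (3*a+2) * (Fintype.card V) < (3*a+5) * G.degree z := by
    intro z
    have h := hdeg z
    have e1 : (3*(a+2)-4) = 3*a+2 := by omega
    have e2 : (3*(a+2)-1) = 3*a+5 := by omega
    rwa [e1, e2] at h
  have hvT : v ∉ T := fun h => G.irrefl (hTv v h)
  have hpT : p ∉ T := fun h => G.irrefl (hTp p h)
  set A : Finset V := insert v (insert p T) with hA
  have hcardA : A.card = a + 3 := by
    rw [hA, Finset.card_insert_of_notMem (by simp [hne, hvT]),
      Finset.card_insert_of_notMem hpT, hT.2]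
    omega
  have hcardD : D.card = a := by rw [hDcard]; omega
  have hclique_pT : G.IsNClique (a+2) (insert p T) :=
    isNClique_congr (hT.insert (fun b hb => hTp b hb)) (by omega)
  have hclique_vT : G.IsNClique (a+2) (insert v T) :=
    isNClique_congr (hT.insert (fun b hb => hTv b hb)) (by omega)
  have hbound : ∀ y : V,
      ((A.filter (fun x => G.Adj x y)).card + (D.filter (fun x => G.Adj x y)).card ≤ 2*a + 1) := by
    intro y
    by_contra hgt
    push_neg at hgt
    have h1 := Finset.card_filter_add_card_filter_not (s := A) (p := fun x => G.Adj x y)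
    have h2 := Finset.card_filter_add_card_filter_not (s := D) (p := fun x => G.Adj x y)
    set MA := A.filter (fun x => ¬ G.Adj x y) with hMA
    set MB := D.filter (fun x => ¬ G.Adj x y) with hMB
    have hmiss : MA.card + MB.card ≤ 1 := by
      rw [hcardA] at h1
      rw [hcardD] at h2
      omega
    have build : ∀ (K : Finset V), G.IsNClique (a+2) K → (∀ x ∈ K, G.Adj x y) → False := by
      intro K hK hadj
      exact hfree (insert y K) (isNClique_congr (hK.insert (fun b hb => (hadj b hb).symm)) (by omega))
    have hMA0 : MA.card = 0 → False := by
      intro h0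
      have hall : ∀ x ∈ A, G.Adj x y := by
        intro x hx
        by_contra hnadj
        have : x ∈ MA := Finset.mem_filter.mpr ⟨hx, hnadj⟩
        rw [Finset.card_eq_zero] at h0
        simp [h0] at this
      exact build (insert p T) hclique_pT
        (fun x hx => hall x (by rw [hA]; exact Finset.mem_insert_of_mem hx))
    rcases (by omega : MA.card = 0 ∨ (MA.card = 1 ∧ MB.card = 0)) with h0 | ⟨h1', h0'⟩
    · exact hMA0 h0
    · obtain ⟨x₀, hx₀⟩ := Finset.card_eq_one.mp h1'
      have hx₀A : x₀ ∈ A ∧ ¬ G.Adj x₀ y := by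
        have : x₀ ∈ MA := by rw [hx₀]; exact Finset.mem_singleton_self x₀
        exact Finset.mem_filter.mp this
      have hadj_other : ∀ x ∈ A, x ≠ x₀ → G.Adj x y := by
        intro x hx hxne
        by_contra hnadj
        have : x ∈ MA := Finset.mem_filter.mpr ⟨hx, hnadj⟩
        rw [hx₀, Finset.mem_singleton] at this
        exact hxne this
      have hDadj : ∀ d ∈ D, G.Adj d y := by
        intro d hd
        by_contra hnadj
        have : d ∈ MB := Finset.mem_filter.mpr ⟨hd, hnadj⟩
        rw [Finset.card_eq_zero] at h0'
        simp [h0'] at this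
      rcases Finset.mem_insert.mp hx₀A.1 with rfl | hx₀'
      · exact build (insert p T) hclique_pT
          (fun x hx => hadj_other x (by rw [hA]; exact Finset.mem_insert_of_mem hx)
            (by rintro rfl; rcases Finset.mem_insert.mp hx with h | h
                · first | exact hne h | exact hne h.symm
                · exact hvT h))
      rcases Finset.mem_insert.mp hx₀' with rfl | hx₀T
      · exact build (insert v T) hclique_vT
          (fun x hx => hadj_other x
            (by rw [hA]; rcases Finset.mem_insert.mp hx with h | h
                · exact Finset.mem_insert.mpr (Or.inl h)
                · exact Finset.mem_insert_of_mem (Finset.mem_insert_of_mem h))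
            (by rintro rfl; rcases Finset.mem_insert.mp hx with h | h
                · first | exact hne h | exact hne h.symm
                · exact hpT h))
      · have hyv : G.Adj v y := hadj_other v (by rw [hA]; exact Finset.mem_insert_self _ _)
          (by rintro rfl; exact hvT hx₀T)
        have hyp : G.Adj p y := hadj_other p
          (by rw [hA]; exact Finset.mem_insert_of_mem (Finset.mem_insert_self _ _))
          (by rintro rfl; exact hpT hx₀T)
        exact hblind y hyv hyp hDadj
  have hsum := count_lemma G A D (2*a+1) hbound
  have hlowA : A.card * ((3*a+2) * (Fintype.card V) + 1) ≤ ∑ x ∈ A, (3*a+5) * G.degree x := by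
    have := Finset.card_nsmul_le_sum A (fun x => (3*a+5) * G.degree x)
      ((3*a+2) * (Fintype.card V) + 1) (fun x _ => Nat.succ_le_of_lt (hdeg' x))
    simpa [smul_eq_mul] using this
  have hlowB : D.card * ((3*a+2) * (Fintype.card V) + 1) ≤ ∑ x ∈ D, (3*a+5) * G.degree x := by
    have := Finset.card_nsmul_le_sum D (fun x => (3*a+5) * G.degree x)
      ((3*a+2) * (Fintype.card V) + 1) (fun x _ => Nat.succ_le_of_lt (hdeg' x))
    simpa [smul_eq_mul] using this
  rw [← Finset.mul_sum] at hlowA hlowB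
  rw [hcardA] at hlowA
  rw [hcardD] at hlowB
  nlinarith [hsum, hlowA, hlowB]

lemma induce_degree [DecidableEq V] (H : SimpleGraph V) [DecidableRel H.Adj] (U : Finset V)
    [inst : DecidableRel (H.induce (↑U : Set V)).Adj]
    (z : ↥(↑U : Set V)) :
    (H.induce (↑U : Set V)).degree z = (U.filter (fun y => H.Adj ↑z y)).card := by
  rw [SimpleGraph.degree]
  apply Finset.card_bij (fun (a : ↥(↑U : Set V)) _ => (a : V))
  · intro a ha
    rw [SimpleGraph.mem_neighborFinset] at ha
    exact Finset.mem_filter.mpr ⟨Finset.mem_coe.mp a.2, ha⟩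
  · intro a _ b _ hab
    exact Subtype.ext hab
  · intro b hb
    rw [Finset.mem_filter] at hb
    refine ⟨⟨b, Finset.mem_coe.mpr hb.1⟩, ?_, rfl⟩
    rw [SimpleGraph.mem_neighborFinset]
    exact hb.2


lemma fin2_absurd {x y z : Fin 2} (h1 : x ≠ y) (h2 : x ≠ z) (h3 : y ≠ z) : False := by
  fin_cases x <;> fin_cases y <;> fin_cases z <;> simp_all

lemma fin2_eq {x y z : Fin 2} (hx : x ≠ z) (hy : y ≠ z) : x = y := by
  fin_cases x <;> fin_cases y <;> fin_cases z <;> simp_all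

theorem aes_main (r : ℕ) (hr : 3 ≤ r) (G : SimpleGraph V) [DecidableRel G.Adj]
    (hfree : G.CliqueFree (r+1))
    (hdeg : ∀ z : V, (3*r-4) * Fintype.card V < (3*r-1) * G.degree z) :
    G.Colorable r := by
  classical
  obtain ⟨H, hGH, hHfree, hHmax⟩ := exists_maximal_ext G (r+1) hfree
  haveI : DecidableRel H.Adj := Classical.decRel _
  have hHdeg : ∀ z : V, (3*r-4) * Fintype.card V < (3*r-1) * H.degree z := fun z =>
    lt_of_lt_of_le (hdeg z) (Nat.mul_le_mul_left _ (degree_mono G H hGH z))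
  suffices hcol : H.Colorable r from hcol.mono_left hGH
  by_cases htrans : ∀ x y z : V, ¬ H.Adj x y → ¬ H.Adj y z → ¬ H.Adj x z
  · exact colorable_of_transitive H r (by omega) hHfree htrans
  exfalso
  push_neg at htrans
  obtain ⟨u, v, w, huv, hvw, huw⟩ := htrans
  have hne_uv : u ≠ v := by rintro rfl; exact hvw huw
  have hne_vw : v ≠ w := by rintro rfl; exact huv huw
  obtain ⟨S, hS, hSadj⟩ := witness_clique hHfree hHmax hne_uv huv
  obtain ⟨T, hT, hTadj⟩ := witness_clique hHfree hHmax hne_vw hvw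
  set n := Fintype.card V with hn
  -- the common neighbourhood of the violating triple
  set X : Finset V := Finset.univ.filter (fun z => H.Adj u z ∧ H.Adj v z ∧ H.Adj w z) with hX
  have hXmem : ∀ {z : V}, z ∈ X ↔ (H.Adj u z ∧ H.Adj v z ∧ H.Adj w z) := by
    intro z
    rw [hX, Finset.mem_filter]
    simp
  -- maximum clique C of X
  have hCne : (X.powerset.filter (fun C : Finset V => H.IsClique (C : Set V))).Nonempty :=
    ⟨∅, by simp⟩
  obtain ⟨C, hCmem, hCmax⟩ := Finset.exists_max_image
    (X.powerset.filter (fun C : Finset V => H.IsClique (C : Set V))) Finset.card hCne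
  rw [Finset.mem_filter, Finset.mem_powerset] at hCmem
  obtain ⟨hCX, hCclique⟩ := hCmem
  have hCmax' : ∀ C' : Finset V, C' ⊆ X → H.IsClique ↑C' → C'.card ≤ C.card := by
    intro C' h1 h2
    exact hCmax C' (by rw [Finset.mem_filter, Finset.mem_powerset]; exact ⟨h1, h2⟩)
  by_cases hbig : r - 2 ≤ C.card
  · -- CASE A : an (r-2)-clique D inside X
    obtain ⟨D, hDC, hDcard⟩ := Finset.exists_subset_card_eq hbig
    have hDX : D ⊆ X := hDC.trans hCX
    have hDclique : H.IsClique ↑D := hCclique.subset (Finset.coe_subset.mpr hDC)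
    have hDadj : ∀ d ∈ D, H.Adj u d ∧ H.Adj v d ∧ H.Adj w d := fun d hd => hXmem.mp (hDX hd)
    set U : Finset V := Finset.univ.filter (fun z => ∀ d ∈ D, H.Adj d z) with hU
    have hUmem : ∀ {z : V}, z ∈ U ↔ ∀ d ∈ D, H.Adj d z := by
      intro z
      rw [hU, Finset.mem_filter]
      simp
    have huU : u ∈ U := hUmem.mpr (fun d hd => ((hDadj d hd).1).symm)
    have hvU : v ∈ U := hUmem.mpr (fun d hd => ((hDadj d hd).2.1).symm)
    have hwU : w ∈ U := hUmem.mpr (fun d hd => ((hDadj d hd).2.2).symm)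
    -- degree bound inside U
    have hbz : ∀ z : V, (3*r-1) * (n - H.degree z) ≤ 3*n - 1 := by
      intro z
      have hdle : H.degree z ≤ n := le_of_lt (H.degree_lt_card_verts z)
      have hsplit : (3*r-1) * (n - H.degree z) + (3*r-1) * (H.degree z) = (3*r-1) * n := by
        rw [← Nat.mul_add, Nat.sub_add_cancel hdle]
      have hPn : (3*r-1)*n = (3*r-4)*n + 3*n := by
        rw [← Nat.add_mul]
        congr 1
        omega
      have := hHdeg z
      omega
    have hUcompl : (3*r-1) * (n - U.card) ≤ (r-2) * (3*n - 1) := by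
      have hsplitU := Finset.card_filter_add_card_filter_not
        (s := (Finset.univ : Finset V)) (p := fun z => ∀ d ∈ D, H.Adj d z)
      have hsub : Finset.univ.filter (fun z => ¬ ∀ d ∈ D, H.Adj d z) ⊆
          D.biUnion (fun d => Finset.univ.filter (fun z => ¬ H.Adj d z)) := by
        intro z hz
        rw [Finset.mem_filter] at hz
        push_neg at hz
        obtain ⟨d, hd, hnadj⟩ := hz.2
        exact Finset.mem_biUnion.mpr ⟨d, hd, by rw [Finset.mem_filter]; exact ⟨Finset.mem_univ _, hnadj⟩⟩
      have hcard1 : (Finset.univ.filter (fun z => ¬ ∀ d ∈ D, H.Adj d z)).card ≤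
          ∑ d ∈ D, (n - H.degree d) := by
        calc (Finset.univ.filter (fun z => ¬ ∀ d ∈ D, H.Adj d z)).card
            ≤ (D.biUnion (fun d => Finset.univ.filter (fun z => ¬ H.Adj d z))).card :=
              Finset.card_le_card hsub
          _ ≤ ∑ d ∈ D, (Finset.univ.filter (fun z => ¬ H.Adj d z)).card := Finset.card_biUnion_le
          _ = ∑ d ∈ D, (n - H.degree d) := by
              apply Finset.sum_congr rfl
              intro d _
              have h2 := Finset.card_filter_add_card_filter_not
                (s := (Finset.univ : Finset V)) (p := fun z => H.Adj d z)
              have h3 : (Finset.univ.filter (fun z => H.Adj d z)).card = H.degree d := by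
                rw [SimpleGraph.degree, neighborFinset_eq_filter]
              rw [Finset.card_univ] at h2
              omega
      have hnu : n - U.card ≤ ∑ d ∈ D, (n - H.degree d) := by
        rw [Finset.card_univ] at hsplitU
        have : U.card = (Finset.univ.filter (fun z => ∀ d ∈ D, H.Adj d z)).card := by rw [hU]
        omega
      calc (3*r-1) * (n - U.card) ≤ (3*r-1) * (∑ d ∈ D, (n - H.degree d)) :=
            Nat.mul_le_mul_left _ hnu
        _ = ∑ d ∈ D, (3*r-1) * (n - H.degree d) := Finset.mul_sum _ _ _
        _ ≤ ∑ d ∈ D, (3*n - 1) := Finset.sum_le_sum (fun d _ => hbz d)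
        _ = D.card * (3*n-1) := by rw [Finset.sum_const, smul_eq_mul]
        _ = (r-2) * (3*n-1) := by rw [hDcard]
    -- the induced graph on U is triangle-free with large min degree, so 2-colorable
    haveI hUdec : DecidableRel (H.induce (↑U : Set V)).Adj := fun a b => ‹DecidableRel H.Adj› _ _
    have hUprop : ∀ {b : V}, b ∈ U → ∀ d ∈ D, H.Adj d b := fun hb => hUmem.mp hb
    have hfree3 : (H.induce (↑U : Set V)).CliqueFree 3 := by
      intro K hK
      obtain ⟨x, y, z, hxy, hxz, hyz, rfl⟩ := Finset.card_eq_three.mp hK.2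
      have haxy : H.Adj ↑x ↑y := hK.1 (by simp) (by simp) hxy
      have haxz : H.Adj ↑x ↑z := hK.1 (by simp) (by simp) hxz
      have hayz : H.Adj ↑y ↑z := hK.1 (by simp) (by simp) hyz
      have hxm : ∀ d ∈ D, H.Adj d ↑x := hUprop (Finset.mem_coe.mp x.2)
      have hym : ∀ d ∈ D, H.Adj d ↑y := hUprop (Finset.mem_coe.mp y.2)
      have hzm : ∀ d ∈ D, H.Adj d ↑z := hUprop (Finset.mem_coe.mp z.2)
      have hDcl : H.IsNClique (r-2) D := ⟨hDclique, hDcard⟩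
      have k1 : H.IsNClique (r-2+1) (insert (↑z : V) D) := hDcl.insert (fun d hd => (hzm d hd).symm)
      have k2 : H.IsNClique (r-2+1+1) (insert (↑y : V) (insert (↑z : V) D)) := by
        apply k1.insert
        intro b hb
        rcases Finset.mem_insert.mp hb with rfl | hbD
        · exact hayz
        · exact (hym b hbD).symm
      have k3 : H.IsNClique (r-2+1+1+1) (insert (↑x : V) (insert (↑y : V) (insert (↑z : V) D))) := by
        apply k2.insert
        intro b hb
        rcases Finset.mem_insert.mp hb with rfl | hb'
        · exact haxy
        rcases Finset.mem_insert.mp hb' with rfl | hbD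
        · exact haxz
        · exact (hxm b hbD).symm
      exact hHfree _ (isNClique_congr k3 (by omega))
    have hdeg2 : ∀ z : ↥(↑U : Set V),
        2 * Fintype.card ↥(↑U : Set V) < 5 * (H.induce (↑U : Set V)).degree z := by
      intro z
      have hcard_coe : Fintype.card ↥(↑U : Set V) = U.card := by simp
      rw [hcard_coe, induce_degree]
      have hzU : (↑z : V) ∈ U := Finset.mem_coe.mp z.2
      -- dz + (n - deg z) ≥ U.card
      have hsplit2 := Finset.card_filter_add_card_filter_not
        (s := U) (p := fun y => H.Adj ↑z y)
      have hneg : (U.filter (fun y => ¬ H.Adj ↑z y)).card ≤ n - H.degree ↑z := by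
        have hsubset : U.filter (fun y => ¬ H.Adj ↑z y) ⊆
            Finset.univ.filter (fun y => ¬ H.Adj ↑z y) :=
          Finset.filter_subset_filter _ (Finset.subset_univ U)
        have h2 := Finset.card_filter_add_card_filter_not
          (s := (Finset.univ : Finset V)) (p := fun y => H.Adj ↑z y)
        have h3 : (Finset.univ.filter (fun y => H.Adj ↑z y)).card = H.degree ↑z := by
          rw [SimpleGraph.degree, neighborFinset_eq_filter]
        have h4 := Finset.card_le_card hsubset
        rw [Finset.card_univ] at h2
        omega
      -- 5 * (n - deg z) < 3 * U.card  via ℤ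
      have h5 : 5 * (n - H.degree ↑z) < 3 * U.card := by
        have hb1 := hbz ↑z
        have hub := hUcompl
        have hUn : U.card ≤ n := by rw [hn]; exact (Finset.card_le_univ U).trans (le_of_eq Finset.card_univ.symm)
        have hdle : H.degree ↑z ≤ n := le_of_lt (H.degree_lt_card_verts ↑z)
        have hn1 : 1 ≤ n := by
          have := Finset.card_pos.mpr ⟨u, huU⟩
          omega
        zify [hdle, hUn, hn1, (by omega : 1 ≤ 3*r), (by omega : 4 ≤ 3*r), (by omega : 2 ≤ r),
          (by omega : 1 ≤ 3*n)] at hb1 hub ⊢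
        nlinarith [hb1, hub, (by push_cast; omega : (3:ℤ) ≤ (r:ℤ))]
      omega
    obtain ⟨c⟩ := aes_two (H.induce (↑U : Set V)) hfree3 hdeg2
    set u' : ↥(↑U : Set V) := ⟨u, Finset.mem_coe.mpr huU⟩ with hu'
    set v' : ↥(↑U : Set V) := ⟨v, Finset.mem_coe.mpr hvU⟩ with hv'
    set w' : ↥(↑U : Set V) := ⟨w, Finset.mem_coe.mpr hwU⟩ with hw'
    have hcuw : c u' ≠ c w' := c.valid huw
    by_cases hcv : c v' = c u'
    · -- D is blind for the pair (v, w)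
      have hblind : ∀ y : V, H.Adj v y → H.Adj w y → (∀ d ∈ D, H.Adj d y) → False := by
        intro y hvy hwy hDy
        have hyU : y ∈ U := hUmem.mpr hDy
        set y' : ↥(↑U : Set V) := ⟨y, Finset.mem_coe.mpr hyU⟩ with hy'
        have h1 : c v' ≠ c y' := c.valid hvy
        have h2 : c w' ≠ c y' := c.valid hwy
        rw [hcv] at h1
        exact fin2_absurd hcuw h1 h2
      exact blind_count (by omega : 2 ≤ r) hHfree hHdeg hvw hne_vw hT
        (fun a ha => (hTadj a ha).1) (fun a ha => (hTadj a ha).2) hDcard hblind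
    · have hcvw : c v' = c w' := fin2_eq hcv (Ne.symm hcuw)
      have hblind : ∀ y : V, H.Adj v y → H.Adj u y → (∀ d ∈ D, H.Adj d y) → False := by
        intro y hvy huy hDy
        have hyU : y ∈ U := hUmem.mpr hDy
        set y' : ↥(↑U : Set V) := ⟨y, Finset.mem_coe.mpr hyU⟩ with hy'
        have h1 : c v' ≠ c y' := c.valid hvy
        have h2 : c u' ≠ c y' := c.valid huy
        rw [hcvw] at h1
        exact fin2_absurd hcuw h2 h1
      exact blind_count (by omega : 2 ≤ r) hHfree hHdeg
        (fun h => huv h.symm : ¬ H.Adj v u) hne_uv.symm hS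
        (fun a ha => (hSadj a ha).2) (fun a ha => (hSadj a ha).1) hDcard hblind
  · -- CASE B : the maximum clique of X is small
    push_neg at hbig
    have hm3 : C.card + 3 ≤ r := by omega
    have hvS : v ∉ S := fun h => H.irrefl ((hSadj v h).2)
    have huC : u ∉ C := fun h => H.irrefl ((hXmem.mp (hCX h)).1)
    have hwC : w ∉ C := fun h => H.irrefl ((hXmem.mp (hCX h)).2.2)
    set A : Finset V := insert v S with hA
    set B : Finset V := insert u (insert w C) with hB
    have hcardA : A.card = r := by
      rw [hA, Finset.card_insert_of_notMem hvS, hS.2]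
      omega
    have hcardB : B.card = C.card + 2 := by
      rw [hB, Finset.card_insert_of_notMem (by simp [huw.ne, huC]),
        Finset.card_insert_of_notMem hwC]
    have hclique_vS : H.IsNClique r (insert v S) :=
      isNClique_congr (hS.insert (fun a ha => (hSadj a ha).2)) (by omega)
    have hclique_uS : H.IsNClique r (insert u S) :=
      isNClique_congr (hS.insert (fun a ha => (hSadj a ha).1)) (by omega)
    have hbound : ∀ y : V, ((A.filter (fun x => H.Adj x y)).card +
        (B.filter (fun x => H.Adj x y)).card ≤ r + C.card) := by
      intro y
      by_contra hgt
      push_neg at hgt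
      have h1 := Finset.card_filter_add_card_filter_not (s := A) (p := fun x => H.Adj x y)
      have h2 := Finset.card_filter_add_card_filter_not (s := B) (p := fun x => H.Adj x y)
      set MA := A.filter (fun x => ¬ H.Adj x y) with hMA
      set MB := B.filter (fun x => ¬ H.Adj x y) with hMB
      have hmiss : MA.card + MB.card ≤ 1 := by
        rw [hcardA] at h1
        rw [hcardB] at h2
        omega
      have build : ∀ (K : Finset V), H.IsNClique r K → (∀ x ∈ K, H.Adj x y) → False := by
        intro K hK hadj
        exact hHfree (insert y K) (hK.insert (fun b hb => (hadj b hb).symm))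
      have hMA0 : MA.card = 0 → False := by
        intro h0
        have hall : ∀ x ∈ A, H.Adj x y := by
          intro x hx
          by_contra hnadj
          have : x ∈ MA := Finset.mem_filter.mpr ⟨hx, hnadj⟩
          rw [Finset.card_eq_zero] at h0
          simp [h0] at this
        exact build (insert v S) hclique_vS (fun x hx => hall x (by rw [hA]; exact hx))
      rcases (by omega : MA.card = 0 ∨ (MA.card = 1 ∧ MB.card = 0)) with h0 | ⟨h1', h0'⟩
      · exact hMA0 h0
      obtain ⟨x₀, hx₀⟩ := Finset.card_eq_one.mp h1'
      have hx₀A : x₀ ∈ A ∧ ¬ H.Adj x₀ y := by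
        have : x₀ ∈ MA := by rw [hx₀]; exact Finset.mem_singleton_self x₀
        exact Finset.mem_filter.mp this
      have hadj_other : ∀ x ∈ A, x ≠ x₀ → H.Adj x y := by
        intro x hx hxne
        by_contra hnadj
        have : x ∈ MA := Finset.mem_filter.mpr ⟨hx, hnadj⟩
        rw [hx₀, Finset.mem_singleton] at this
        exact hxne this
      have hBadj : ∀ x ∈ B, H.Adj x y := by
        intro x hx
        by_contra hnadj
        have : x ∈ MB := Finset.mem_filter.mpr ⟨hx, hnadj⟩
        rw [Finset.card_eq_zero] at h0'
        simp [h0'] at this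
      rcases Finset.mem_insert.mp hx₀A.1 with rfl | hx₀S
      · apply build (insert u S) hclique_uS
        intro x hx
        rcases Finset.mem_insert.mp hx with rfl | hxS
        · exact hBadj x (by rw [hB]; exact Finset.mem_insert_self _ _)
        · exact hadj_other x (by rw [hA]; exact Finset.mem_insert_of_mem hxS)
            (by rintro rfl; exact hvS hxS)
      · have hyv : H.Adj v y := hadj_other v (by rw [hA]; exact Finset.mem_insert_self _ _)
          (by rintro rfl; exact hvS hx₀S)
        have hyu : H.Adj u y := hBadj u (by rw [hB]; exact Finset.mem_insert_self _ _)
        have hyw : H.Adj w y := hBadj w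
          (by rw [hB]; exact Finset.mem_insert_of_mem (Finset.mem_insert_self _ _))
        have hyC : ∀ x ∈ C, H.Adj x y := fun x hx => hBadj x
          (by rw [hB]; exact Finset.mem_insert_of_mem (Finset.mem_insert_of_mem hx))
        have hyX : y ∈ X := hXmem.mpr ⟨hyu, hyv, hyw⟩
        have hyC' : y ∉ C := fun h => H.irrefl (hyC y h)
        have hclq : H.IsClique (↑(insert y C) : Set V) := by
          rw [Finset.coe_insert]
          exact hCclique.insert (fun b hb _ => ((hyC b (Finset.mem_coe.mp hb)).symm))
        have hle := hCmax' (insert y C) (Finset.insert_subset hyX hCX) hclq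
        rw [Finset.card_insert_of_notMem hyC'] at hle
        omega
    have hsum := count_lemma H A B (r + C.card) hbound
    have hlowA : A.card * ((3*r-4) * n + 1) ≤ ∑ x ∈ A, (3*r-1) * H.degree x := by
      have := Finset.card_nsmul_le_sum A (fun x => (3*r-1) * H.degree x) ((3*r-4) * n + 1)
        (fun x _ => Nat.succ_le_of_lt (hHdeg x))
      simpa [smul_eq_mul] using this
    have hlowB : B.card * ((3*r-4) * n + 1) ≤ ∑ x ∈ B, (3*r-1) * H.degree x := by
      have := Finset.card_nsmul_le_sum B (fun x => (3*r-1) * H.degree x) ((3*r-4) * n + 1)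
        (fun x _ => Nat.succ_le_of_lt (hHdeg x))
      simpa [smul_eq_mul] using this
    rw [← Finset.mul_sum] at hlowA hlowB
    rw [hcardA] at hlowA
    rw [hcardB] at hlowB
    -- final arithmetic
    set m := C.card with hm
    set SA := ∑ x ∈ A, H.degree x with hSA
    set SB := ∑ x ∈ B, H.degree x with hSB
    rw [← hn] at hsum
    have hn0 : (0:ℤ) ≤ (n:ℤ) := Int.natCast_nonneg n
    have h3r : (3:ℤ) ≤ (r:ℤ) := by exact_mod_cast hr
    have h3r1 : (0:ℤ) ≤ 3*(r:ℤ)-1 := by linarith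
    zify [(by omega : 4 ≤ 3*r), (by omega : 1 ≤ 3*r)] at hsum hlowA hlowB
    have hkey : (1:ℤ) ≤ 3*(r:ℤ) - 3*(m:ℤ) - 8 := by
      have : (m:ℤ) + 3 ≤ (r:ℤ) := by exact_mod_cast hm3
      linarith
    nlinarith [hsum, hlowA, hlowB, hn0, hkey,
      mul_le_mul_of_nonneg_left hsum h3r1,
      mul_nonneg (by linarith : (0:ℤ) ≤ 3*(r:ℤ) - 3*(m:ℤ) - 8) hn0]

/-- Dispatcher: the Andrásfai–Erdős–Sós theorem in arithmetic form. -/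
theorem aes_nat (r : ℕ) (hr : 2 ≤ r) (G : SimpleGraph V) [DecidableRel G.Adj]
    (hfree : G.CliqueFree (r+1))
    (hdeg : ∀ z : V, (3*r-4) * Fintype.card V < (3*r-1) * G.degree z) :
    G.Colorable r := by
  by_cases hr2 : r = 2
  · subst hr2
    exact aes_two G hfree (fun z => by have := hdeg z; norm_num at this ⊢; exact this)
  · exact aes_main r (by omega) G hfree hdeg

end AndrasfaiErdosSos

open AndrasfaiErdosSos in
/-- **Andrásfai–Erdős–Sós theorem.** If `G` is a `K_{r+1}`-free graph on `n` vertices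
with minimum degree strictly greater than `(1 - 1/(r - 1/3)) * n`, then `G` is
`r`-colourable. -/
theorem statement0 {V : Type*} [Fintype V] (r : ℕ) (hr : 2 ≤ r)
    (G : SimpleGraph V) [DecidableRel G.Adj]
    (hfree : G.CliqueFree (r + 1))
    (hdeg : (1 - 1 / ((r : ℝ) - 1 / 3)) * (Fintype.card V : ℝ) < (G.minDegree : ℝ)) :
    G.Colorable r := by
  classical
  have hr2 : (2:ℝ) ≤ (r:ℝ) := by exact_mod_cast hr
  have hpos : (0:ℝ) < (r:ℝ) - 1/3 := by linarith
  have hco : (1 - 1/((r:ℝ) - 1/3)) = (3*(r:ℝ) - 4)/(3*(r:ℝ) - 1) := by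
    have h1 : (r:ℝ) - 1/3 ≠ 0 := ne_of_gt hpos
    have h2 : 3*(r:ℝ) - 1 ≠ 0 := by intro h; simp only [sub_eq_zero] at h; nlinarith
    have h3 : ((r:ℝ) - 1/3) = (3*(r:ℝ)-1)/3 := by ring
    rw [h3, one_div_div, eq_div_iff h2, sub_mul, div_mul_cancel₀ _ h2]
    ring
  have hdeg' : (3*(r:ℝ) - 4) * (Fintype.card V : ℝ) < (3*(r:ℝ) - 1) * (G.minDegree : ℝ) := by
    rw [hco, div_mul_eq_mul_div, div_lt_iff₀ (by linarith : (0:ℝ) < 3*(r:ℝ) - 1)] at hdeg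
    linarith
  have hNatMin : (3*r - 4) * Fintype.card V < (3*r - 1) * G.minDegree := by
    have h4 : ((3*r - 4 : ℕ) : ℝ) = 3*(r:ℝ) - 4 := by
      rw [Nat.cast_sub (by omega : 4 ≤ 3*r)]
      push_cast
      ring
    have h1 : ((3*r - 1 : ℕ) : ℝ) = 3*(r:ℝ) - 1 := by
      rw [Nat.cast_sub (by omega : 1 ≤ 3*r)]
      push_cast
      ring
    have : ((3*r - 4 : ℕ) : ℝ) * (Fintype.card V : ℝ) <
        ((3*r - 1 : ℕ) : ℝ) * (G.minDegree : ℝ) := by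
      rw [h4, h1]
      exact hdeg'
    exact_mod_cast this
  exact aes_nat r hr G hfree
    (fun z => lt_of_lt_of_le hNatMin (Nat.mul_le_mul_left _ (G.minDegree_le_degree z)))
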